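/- arXiv:2007.11078 — 3 statements merged into one kernel-verified Lean document; each statement's English description precedes it below -/
import Mathlib

section
/- Let φ and Φ denote the standard normal PDF and CDF. The function h(t) = 2[(1+t²)Φ(-t) - tφ(t)] is strictly decreasing on (0, ∞). -/
noncomputable def stdNormalPDF (x : ℝ) : ℝ := Real.exp (-x ^ 2 / 2) / Real.sqrt (2 * Real.pi)

noncomputable def stdNormalCDF (x : ℝ) : ℝ := ∫ t in Set.Iic x, stdNormalPDF t

open Real MeasureTheory Set Filter Topology

lemma pdf_pos (x : ℝ) : 0 < stdNormalPDF x := by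
  unfold stdNormalPDF
  positivity

lemma pdf_even (x : ℝ) : stdNormalPDF (-x) = stdNormalPDF x := by
  unfold stdNormalPDF
  rw [neg_sq]

lemma pdf_cont : Continuous stdNormalPDF := by
  unfold stdNormalPDF
  fun_prop

lemma pdf_integrable : Integrable stdNormalPDF := by
  have := (integrable_exp_neg_mul_sq (by norm_num : (0:ℝ) < 1/2)).div_const
    (Real.sqrt (2 * Real.pi))
  refine this.congr ?_
  filter_upwards with x
  unfold stdNormalPDF
  ring_nf

lemma pdf_hasDerivAt (x : ℝ) :
    HasDerivAt stdNormalPDF (-x * stdNormalPDF x) x := by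
  have h1 : HasDerivAt (fun x : ℝ => -x ^ 2 / 2) (-x) x := by
    have := ((hasDerivAt_pow 2 x).neg.div_const 2)
    refine this.congr_deriv ?_
    norm_num; ring
  have h2 := (h1.exp).div_const (Real.sqrt (2 * Real.pi))
  have he : stdNormalPDF = fun x => Real.exp (-x ^ 2 / 2) / Real.sqrt (2 * Real.pi) := rfl
  rw [he]
  refine h2.congr_deriv ?_
  beta_reduce
  ring

lemma cdf_hasDerivAt (x : ℝ) : HasDerivAt stdNormalCDF (stdNormalPDF x) x := by
  have key : ∀ y : ℝ, stdNormalCDF y = stdNormalCDF 0 + ∫ t in (0:ℝ)..y, stdNormalPDF t := by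
    intro y
    rw [← intervalIntegral.integral_Iic_sub_Iic pdf_integrable.integrableOn
      pdf_integrable.integrableOn]
    unfold stdNormalCDF
    ring
  have hD : HasDerivAt (fun y => stdNormalCDF 0 + ∫ t in (0:ℝ)..y, stdNormalPDF t)
      (stdNormalPDF x) x := by
    refine HasDerivAt.const_add _ ?_
    exact intervalIntegral.integral_hasDerivAt_right
      (pdf_integrable.intervalIntegrable)
      (pdf_cont.stronglyMeasurable.stronglyMeasurableAtFilter)
      (pdf_cont.continuousAt)
  exact hD.congr_of_eventuallyEq (Filter.Eventually.of_forall key)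

lemma x_pdf_integrable : Integrable (fun x : ℝ => x * stdNormalPDF x) := by
  have := (integrable_mul_exp_neg_mul_sq (by norm_num : (0:ℝ) < 1/2)).div_const
    (Real.sqrt (2 * Real.pi))
  refine this.congr ?_
  filter_upwards with x
  unfold stdNormalPDF
  ring_nf

lemma pdf_tendsto_zero : Tendsto stdNormalPDF atTop (𝓝 0) := by
  have h0 : Tendsto (fun x : ℝ => x ^ 2) atTop atTop := tendsto_pow_atTop two_ne_zero
  have h1 : Tendsto (fun x : ℝ => -x ^ 2 / 2) atTop atBot := by
    apply Tendsto.atBot_div_const (by norm_num)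
    exact tendsto_neg_atBot_iff.mpr h0
  have h2 := (Real.tendsto_exp_atBot.comp h1).div_const (Real.sqrt (2 * Real.pi))
  exact (by simpa only [Function.comp_def, div_zero, zero_div] using h2 :
    Tendsto (fun x => Real.exp (-x ^ 2 / 2) / Real.sqrt (2 * Real.pi)) atTop (𝓝 0))

lemma integral_x_pdf (t : ℝ) : ∫ x in Ioi t, x * stdNormalPDF x = stdNormalPDF t := by
  have H : ∫ x in Ioi t, x * stdNormalPDF x = 0 - -stdNormalPDF t := by
    refine integral_Ioi_of_hasDerivAt_of_tendsto
      (f := fun x => -stdNormalPDF x) (pdf_cont.neg.continuousWithinAt)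
      (fun x _ => ?_) (x_pdf_integrable.integrableOn) (by simpa using pdf_tendsto_zero.neg)
    simpa [Pi.neg_def] using (pdf_hasDerivAt x).neg
  simpa using H

lemma cdf_neg_eq (t : ℝ) : stdNormalCDF (-t) = ∫ x in Ioi t, stdNormalPDF x := by
  have := integral_comp_neg_Iic (-t) stdNormalPDF
  simp only [pdf_even, neg_neg] at this
  exact this.symm ▸ rfl

lemma tail_bound {t : ℝ} (ht : 0 < t) : t * stdNormalCDF (-t) < stdNormalPDF t := by
  rw [cdf_neg_eq]
  have hsub : ∫ x in Ioi t, (x - t) * stdNormalPDF x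
      = stdNormalPDF t - t * ∫ x in Ioi t, stdNormalPDF x := by
    rw [← integral_x_pdf t, ← MeasureTheory.integral_const_mul t,
      ← integral_sub (x_pdf_integrable.integrableOn)
        ((pdf_integrable.const_mul t).integrableOn)]
    exact setIntegral_congr_fun measurableSet_Ioi fun x _ => by ring
  have hpos : 0 < ∫ x in Ioi t, (x - t) * stdNormalPDF x := by
    rw [setIntegral_pos_iff_support_of_nonneg_ae]
    · refine lt_of_lt_of_le (b := volume (Ioi (t + 1))) ?_ (measure_mono ?_)
      · simp [Real.volume_Ioi]
      · intro x hx
        simp only [mem_Ioi] at hx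
        refine ⟨?_, by simp only [mem_Ioi]; linarith⟩
        simp only [Function.mem_support]
        have h1 : (0:ℝ) < x - t := by linarith
        exact ne_of_gt (mul_pos h1 (pdf_pos x))
    · filter_upwards [ae_restrict_mem measurableSet_Ioi] with x hx
      simp only [mem_Ioi] at hx
      exact mul_nonneg (by linarith) (pdf_pos x).le
    · refine (((x_pdf_integrable.integrableOn).sub
        ((pdf_integrable.const_mul t).integrableOn)).congr ?_)
      filter_upwards with x
      simp only [Pi.sub_apply]
      ring
  linarith [hsub ▸ hpos]

lemma h_hasDerivAt (t : ℝ) :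
    HasDerivAt (fun t : ℝ => 2 * ((1 + t ^ 2) * stdNormalCDF (-t) - t * stdNormalPDF t))
      (4 * (t * stdNormalCDF (-t) - stdNormalPDF t)) t := by
  have hΦ : HasDerivAt (fun t : ℝ => stdNormalCDF (-t)) (-stdNormalPDF t) t := by
    have := (cdf_hasDerivAt (-t)).comp t (hasDerivAt_neg t)
    simpa [pdf_even, Function.comp_def] using this
  have h1 : HasDerivAt (fun t : ℝ => 1 + t ^ 2) (2 * t) t := by
    simpa using ((hasDerivAt_pow 2 t).const_add 1)
  have h2 := h1.mul hΦ
  have h3 := (hasDerivAt_id t).mul (pdf_hasDerivAt t)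
  have h4 := ((h2.sub h3).const_mul 2)
  refine h4.congr_deriv ?_
  simp only [id_eq]
  ring

theorem h_strictAnti :
    StrictAntiOn (fun t : ℝ => 2 * ((1 + t ^ 2) * stdNormalCDF (-t) - t * stdNormalPDF t))
      (Set.Ioi 0) := by
  apply strictAntiOn_of_deriv_neg (convex_Ioi 0)
  · exact Continuous.continuousOn (continuous_iff_continuousAt.2
      fun t => (h_hasDerivAt t).continuousAt)
  · intro t ht
    rw [interior_Ioi] at ht
    rw [(h_hasDerivAt t).deriv]
    have := tail_bound ht
    nlinarith
end

section
/- Let η_α be the soft-thresholding operator at level α > 0 and W a standard normal random variable. Then lim_{M→∞} E[(η_α(M + W) - M)²] = 1 + α². -/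
open ProbabilityTheory MeasureTheory Filter Real
open scoped NNReal ENNReal

lemma Real.sign_mul_abs' (y : ℝ) : Real.sign y * |y| = y := by
  rcases lt_trichotomy y 0 with hy | hy | hy
  · rw [Real.sign_of_neg hy, abs_of_neg hy]; ring
  · simp [hy]
  · rw [Real.sign_of_pos hy, abs_of_pos hy, one_mul]

noncomputable def softThresh (α x : ℝ) : ℝ := Real.sign x * max (|x| - α) 0

lemma measurable_softThresh (α : ℝ) : Measurable (softThresh α) := by
  have hs : Measurable Real.sign := by
    have h : Real.sign = fun r : ℝ => if r < 0 then (-1 : ℝ) else if 0 < r then 1 else 0 := by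
      funext r; rfl
    rw [h]
    exact Measurable.ite measurableSet_Iio measurable_const
      (Measurable.ite measurableSet_Ioi measurable_const measurable_const)
  exact hs.mul ((measurable_id.abs.sub measurable_const).max measurable_const)

lemma abs_softThresh_sub (α y : ℝ) (hα : 0 ≤ α) : |softThresh α y - y| ≤ α := by
  unfold softThresh
  rcases le_or_gt (|y|) α with h | h
  · rw [max_eq_right (by linarith), mul_zero, zero_sub, abs_neg]
    exact h
  · rw [max_eq_left (by linarith)]
    have h1 : Real.sign y * (|y| - α) - y = -(Real.sign y * α) := by
      rw [mul_sub, Real.sign_mul_abs']; ring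
    rw [h1, abs_neg, abs_mul]
    have h2 : |Real.sign y| ≤ 1 := by
      rcases lt_trichotomy y 0 with hy | hy | hy
      · simp [Real.sign_of_neg hy]
      · simp [hy]
      · simp [Real.sign_of_pos hy]
    calc |Real.sign y| * |α| ≤ 1 * |α| := by
          exact mul_le_mul_of_nonneg_right h2 (abs_nonneg _)
      _ = α := by rw [one_mul, abs_of_nonneg hα]

lemma softThresh_of_gt {α y : ℝ} (hα : 0 < α) (h : α < y) : softThresh α y = y - α := by
  unfold softThresh
  have hy : 0 < y := hα.trans h
  rw [Real.sign_of_pos hy, one_mul, abs_of_pos hy, max_eq_left (by linarith)]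

lemma gaussianReal_zero_one_eq :
    gaussianReal 0 1 = MeasureTheory.volume.withDensity
      (fun x => ((Real.toNNReal (gaussianPDFReal 0 1 x) : ℝ≥0) : ℝ≥0∞)) := by
  rw [gaussianReal_of_var_ne_zero 0 one_ne_zero]; rfl

lemma pdf01 (x : ℝ) :
    gaussianPDFReal 0 1 x = (Real.sqrt (2 * π))⁻¹ * Real.exp (-(2⁻¹ : ℝ) * x ^ 2) := by
  simp only [gaussianPDFReal, NNReal.coe_one, mul_one, sub_zero]
  ring_nf

theorem soft_thresh_shift_limit (α : ℝ) (hα : 0 < α) :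
    Filter.Tendsto (fun M : ℝ => ∫ x, (softThresh α (M + x) - M) ^ 2 ∂(gaussianReal 0 1))
      Filter.atTop (nhds (1 + α ^ 2)) := by
  have hmeas : Measurable fun x : ℝ => Real.toNNReal (gaussianPDFReal 0 1 x) :=
    (measurable_gaussianPDFReal 0 1).real_toNNReal
  set c : ℝ := (Real.sqrt (2 * π))⁻¹ with hc
  have hπ : (0 : ℝ) < 2 * π := by positivity
  have hsqrt : Real.sqrt (2 * π) ≠ 0 := ne_of_gt (Real.sqrt_pos.mpr hπ)
  -- basic integrals
  have he : Integrable (fun x : ℝ => Real.exp (-(2⁻¹ : ℝ) * x ^ 2)) :=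
    integrable_exp_neg_mul_sq (by norm_num)
  have hxe : Integrable (fun x : ℝ => x * Real.exp (-(2⁻¹ : ℝ) * x ^ 2)) :=
    integrable_mul_exp_neg_mul_sq (by norm_num)
  have hx2e : Integrable (fun x : ℝ => x ^ 2 * Real.exp (-(2⁻¹ : ℝ) * x ^ 2)) := by
    have h := integrable_rpow_mul_exp_neg_mul_sq (b := 2⁻¹) (by norm_num) (s := 2) (by norm_num)
    simpa [Real.rpow_two] using h
  have J0 : ∫ x : ℝ, Real.exp (-(2⁻¹ : ℝ) * x ^ 2) = Real.sqrt (2 * π) := by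
    have h := integral_gaussian (2⁻¹ : ℝ)
    rw [h]
    norm_num [mul_comm]
  -- derivative of -exp(-x^2/2)
  have hderiv : ∀ x : ℝ, HasDerivAt (fun y : ℝ => -Real.exp (-(2⁻¹ : ℝ) * y ^ 2))
      (x * Real.exp (-(2⁻¹ : ℝ) * x ^ 2)) x := by
    intro x
    have h1 : HasDerivAt (fun y : ℝ => -(2⁻¹ : ℝ) * y ^ 2) (-(2⁻¹ : ℝ) * (2 * x ^ 1)) x :=
      (hasDerivAt_pow 2 x).const_mul _
    have h2 : HasDerivAt (fun y : ℝ => -Real.exp (-(2⁻¹ : ℝ) * y ^ 2)) _ x := h1.exp.neg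
    convert h2 using 1
    ring
  -- tendsto of -exp(-x^2/2) to 0 at ±∞
  have hsq_top : Tendsto (fun y : ℝ => y ^ 2) atTop atTop :=
    tendsto_pow_atTop two_ne_zero
  have hsq_bot : Tendsto (fun y : ℝ => y ^ 2) atBot atTop := by
    have hfun : (fun y : ℝ => y ^ 2) = fun y : ℝ => (-y) ^ 2 := by funext y; ring
    rw [hfun]
    exact hsq_top.comp tendsto_neg_atBot_atTop
  have harg_top : Tendsto (fun y : ℝ => -(2⁻¹ : ℝ) * y ^ 2) atTop atBot := by
    have hfun : (fun y : ℝ => -(2⁻¹ : ℝ) * y ^ 2) = fun y : ℝ => -((2⁻¹ : ℝ) * y ^ 2) := by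
      funext y; ring
    rw [hfun]
    exact tendsto_neg_atTop_atBot.comp
      (hsq_top.const_mul_atTop (show (0:ℝ) < 2⁻¹ by norm_num))
  have harg_bot : Tendsto (fun y : ℝ => -(2⁻¹ : ℝ) * y ^ 2) atBot atBot := by
    have hfun : (fun y : ℝ => -(2⁻¹ : ℝ) * y ^ 2) = fun y : ℝ => -((2⁻¹ : ℝ) * y ^ 2) := by
      funext y; ring
    rw [hfun]
    exact tendsto_neg_atTop_atBot.comp
      (hsq_bot.const_mul_atTop (show (0:ℝ) < 2⁻¹ by norm_num))
  have htop : Tendsto (fun y : ℝ => -Real.exp (-(2⁻¹ : ℝ) * y ^ 2)) atTop (nhds 0) := by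
    have h := (Real.tendsto_exp_atBot.comp harg_top).neg
    simpa [Function.comp] using h
  have hbot : Tendsto (fun y : ℝ => -Real.exp (-(2⁻¹ : ℝ) * y ^ 2)) atBot (nhds 0) := by
    have h := (Real.tendsto_exp_atBot.comp harg_bot).neg
    simpa [Function.comp] using h
  have J1 : ∫ x : ℝ, x * Real.exp (-(2⁻¹ : ℝ) * x ^ 2) = 0 := by
    have h := integral_of_hasDerivAt_of_tendsto hderiv hxe hbot htop
    simpa using h
  have J2 : ∫ x : ℝ, x * (x * Real.exp (-(2⁻¹ : ℝ) * x ^ 2)) = Real.sqrt (2 * π) := by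
    have hu : ∀ x : ℝ, HasDerivAt (fun y : ℝ => y) (1 : ℝ) x := fun x => hasDerivAt_id x
    have huv' : Integrable ((fun y : ℝ => y) * fun x => x * Real.exp (-(2⁻¹ : ℝ) * x ^ 2)) := by
      apply hx2e.congr
      filter_upwards with x
      simp [Pi.mul_apply]; ring
    have hu'v : Integrable ((fun _ : ℝ => (1:ℝ)) * fun y : ℝ => -Real.exp (-(2⁻¹ : ℝ) * y ^ 2)) := by
      apply he.neg.congr
      filter_upwards with x
      simp
    have huv : Integrable ((fun y : ℝ => y) * fun y : ℝ => -Real.exp (-(2⁻¹ : ℝ) * y ^ 2)) := by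
      apply hxe.neg.congr
      filter_upwards with x
      simp [Pi.mul_apply]
    have h := MeasureTheory.integral_mul_deriv_eq_deriv_mul_of_integrable
      (fun x _ => hu x) (fun x _ => hderiv x) huv' hu'v huv
    rw [h, ← J0]
    rw [← MeasureTheory.integral_neg]
    congr 1
    funext x
    simp
  -- integrability transfers
  have hint2 : Integrable (fun x : ℝ => x ^ 2) (gaussianReal 0 1) := by
    rw [gaussianReal_zero_one_eq, integrable_withDensity_iff_integrable_smul hmeas]
    apply ((hx2e.const_mul c).congr)
    filter_upwards with x
    rw [NNReal.smul_def, Real.coe_toNNReal _ (gaussianPDFReal_nonneg 0 1 x), smul_eq_mul, pdf01]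
    ring
  -- identity: ∫ (x - α)^2 dγ = 1 + α^2
  have key : ∫ x, (x - α) ^ 2 ∂(gaussianReal 0 1) = 1 + α ^ 2 := by
    rw [gaussianReal_zero_one_eq, integral_withDensity_eq_integral_smul hmeas]
    have heq : ∀ x : ℝ, (Real.toNNReal (gaussianPDFReal 0 1 x)) • ((x - α) ^ 2)
        = c * (x * (x * Real.exp (-(2⁻¹ : ℝ) * x ^ 2)))
          - (2 * α) * (c * (x * Real.exp (-(2⁻¹ : ℝ) * x ^ 2)))
          + α ^ 2 * (c * Real.exp (-(2⁻¹ : ℝ) * x ^ 2)) := by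
      intro x
      rw [NNReal.smul_def, Real.coe_toNNReal _ (gaussianPDFReal_nonneg 0 1 x), smul_eq_mul, pdf01]
      ring
    rw [MeasureTheory.integral_congr_ae (Filter.Eventually.of_forall heq)]
    have i1 : Integrable (fun x : ℝ => c * (x * (x * Real.exp (-(2⁻¹ : ℝ) * x ^ 2)))) := by
      apply (hx2e.const_mul c).congr
      filter_upwards with x
      ring
    have i2 : Integrable (fun x : ℝ =>
        (2 * α) * (c * (x * Real.exp (-(2⁻¹ : ℝ) * x ^ 2)))) := by
      apply (hxe.const_mul ((2 * α) * c)).congr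
      filter_upwards with x
      ring
    have i3 : Integrable (fun x : ℝ => α ^ 2 * (c * Real.exp (-(2⁻¹ : ℝ) * x ^ 2))) := by
      apply (he.const_mul (α ^ 2 * c)).congr
      filter_upwards with x
      ring
    have i12 : Integrable (fun x : ℝ => c * (x * (x * Real.exp (-(2⁻¹ : ℝ) * x ^ 2)))
        - (2 * α) * (c * (x * Real.exp (-(2⁻¹ : ℝ) * x ^ 2)))) := i1.sub i2
    rw [MeasureTheory.integral_add i12 i3, MeasureTheory.integral_sub i1 i2,
      MeasureTheory.integral_const_mul, MeasureTheory.integral_const_mul,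
      MeasureTheory.integral_const_mul, MeasureTheory.integral_const_mul,
      MeasureTheory.integral_const_mul, J0, J1, J2]
    have hcs : c * Real.sqrt (2 * π) = 1 := by rw [hc]; exact inv_mul_cancel₀ hsqrt
    linear_combination (1 + α ^ 2) * hcs
  -- dominated convergence
  have hDCT := MeasureTheory.tendsto_integral_filter_of_dominated_convergence
    (μ := gaussianReal 0 1) (l := atTop)
    (F := fun M : ℝ => fun x : ℝ => (softThresh α (M + x) - M) ^ 2)
    (f := fun x : ℝ => (x - α) ^ 2)
    (bound := fun x : ℝ => 2 * α ^ 2 + 2 * x ^ 2)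
    (by
      filter_upwards with M
      exact ((((measurable_softThresh α).comp (measurable_const_add M)).sub
        measurable_const).pow_const 2).aestronglyMeasurable)
    (by
      filter_upwards with M
      filter_upwards with x
      have h1 : |softThresh α (M + x) - M| ≤ α + |x| := by
        have h2 := abs_softThresh_sub α (M + x) hα.le
        calc |softThresh α (M + x) - M|
            = |(softThresh α (M + x) - (M + x)) + x| := by ring_nf
          _ ≤ |softThresh α (M + x) - (M + x)| + |x| := abs_add_le _ _
          _ ≤ α + |x| := by linarith
      have h3 : (softThresh α (M + x) - M) ^ 2 ≤ (α + |x|) ^ 2 := by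
        rw [← sq_abs]
        exact pow_le_pow_left₀ (abs_nonneg _) h1 2
      have h4 : (α + |x|) ^ 2 ≤ 2 * α ^ 2 + 2 * x ^ 2 := by
        nlinarith [sq_nonneg (α - |x|), sq_abs x]
      rw [Real.norm_eq_abs, abs_of_nonneg (sq_nonneg _)]
      linarith)
    (((MeasureTheory.integrable_const (2 * α ^ 2)).add (hint2.const_mul 2)))
    (by
      filter_upwards with x
      apply Filter.Tendsto.congr' _ tendsto_const_nhds
      filter_upwards [Filter.eventually_ge_atTop (α - x + 1)] with M hM
      have hgt : α < M + x := by linarith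
      rw [softThresh_of_gt hα hgt]
      ring)
  rw [key] at hDCT
  exact hDCT
end

section
/- Let A = [0,1] × [0,1] and f : A → ℝ² be continuous. Suppose the restriction of f to the boundary ∂A is a Jordan curve (injective closed curve) C. Then every point of the bounded component of ℝ² \ C is in the image of f. -/
open Set

noncomputable section PIV

namespace PIV

lemma unit_exp_arg {w : ℂ} (hw : ‖w‖ = 1) :
    Complex.exp ((w.arg : ℂ) * Complex.I) = w := by
  have h := Complex.norm_mul_exp_arg_mul_I w
  rw [hw] at h
  simpa using h

lemma unit_slit {w : ℂ} (hw : ‖w‖ = 1) (hw' : w ≠ -1) :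
    w ∈ Complex.slitPlane := by
  rw [Complex.mem_slitPlane_iff]
  by_contra h
  push_neg at h
  obtain ⟨hre, him⟩ := h
  have hwre : w = (w.re : ℂ) := by
    apply Complex.ext <;> simp [him]
  rw [hwre, Complex.norm_real, Real.norm_eq_abs] at hw
  have : w.re = -1 := by
    rcases abs_eq (by norm_num : (0:ℝ) ≤ 1) |>.mp hw with h1 | h1
    · linarith
    · exact h1
  apply hw'
  rw [hwre, this]
  norm_num

lemma unit_ne_zero {w : ℂ} (hw : ‖w‖ = 1) : w ≠ 0 := by
  intro h; rw [h] at hw; simp at hw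

/-- Path lifting on `[0,1]` along the complex exponential. -/
lemma lift_exists {γ : ℝ → ℂ} (hγ : Continuous γ) (hu : ∀ s, ‖γ s‖ = 1) :
    ∃ θ : ℝ → ℝ, Continuous θ ∧ ∀ s ∈ Icc (0:ℝ) 1,
      Complex.exp ((θ s : ℂ) * Complex.I) = γ s := by
  have huc := (isCompact_Icc (a := (0:ℝ)) (b := 1)).uniformContinuousOn_of_continuous
    hγ.continuousOn
  rw [Metric.uniformContinuousOn_iff] at huc
  obtain ⟨δ, hδ, hδ2⟩ := huc 2 (by norm_num)
  obtain ⟨m, hm⟩ := exists_nat_one_div_lt hδ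
  set n : ℕ := m + 1 with hn
  have hnpos : (0:ℝ) < n := by positivity
  -- the subdivision points
  set u : ℕ → ℝ → ℝ := fun i t => min (max t 0) (i / n) with hu_def
  have hu0 : ∀ t, u 0 t = 0 := by
    intro t
    simp [hu_def, min_eq_right (le_max_right t 0)]
  have humem : ∀ i, i ≤ n → ∀ t, u i t ∈ Icc (0:ℝ) 1 := by
    intro i hi t
    constructor
    · exact le_min (le_max_right t 0) (by positivity)
    · refine (min_le_right _ _).trans ?_
      rw [div_le_one hnpos]
      exact_mod_cast hi
  have hudiff : ∀ i t, u i t ≤ u (i+1) t ∧ u (i+1) t - u i t ≤ 1 / n := by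
    intro i t
    have hstep : (i:ℝ)/n ≤ (i+1:ℕ)/n := by
      gcongr
      exact_mod_cast Nat.le_succ i
    constructor
    · exact min_le_min le_rfl hstep
    · rcases le_total (max t 0) ((i:ℝ)/n) with h | h
      · have h1 : u i t = max t 0 := min_eq_left h
        have h2 : u (i+1) t = max t 0 := min_eq_left (h.trans hstep)
        rw [h1, h2]
        simp only [sub_self]
        positivity
      · have h1 : u i t = (i:ℝ)/n := min_eq_right h
        have h2 : u (i+1) t ≤ ((i+1:ℕ):ℝ)/n := min_le_right _ _
        rw [h1]
        have : ((i+1:ℕ):ℝ)/n - (i:ℝ)/n = 1/n := by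
          push_cast; ring
        linarith
  -- the ratios
  set r : ℕ → ℝ → ℂ := fun i t => γ (u (i+1) t) / γ (u i t) with hr_def
  have hrunit : ∀ i t, ‖r i t‖ = 1 := by
    intro i t
    simp [hr_def, norm_div, hu]
  have hrclose : ∀ i, i < n → ∀ t, ‖r i t - 1‖ < 2 := by
    intro i hi t
    have hmem1 := humem (i+1) hi t
    have hmem0 := humem i (Nat.le_of_lt hi) t
    have hdist : dist (u (i+1) t) (u i t) < δ := by
      rw [Real.dist_eq, abs_of_nonneg (by linarith [(hudiff i t).1])]
      calc u (i+1) t - u i t ≤ 1/n := (hudiff i t).2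
        _ < δ := by rw [hn]; push_cast; exact_mod_cast hm
    have := hδ2 _ hmem1 _ hmem0 hdist
    rw [Complex.dist_eq] at this
    have hne : γ (u i t) ≠ 0 := unit_ne_zero (hu _)
    have : ‖r i t - 1‖ = ‖γ (u (i+1) t) - γ (u i t)‖ := by
      rw [hr_def]
      simp only [div_sub_one hne, norm_div, hu, div_one]
    linarith
  have hrslit : ∀ i, i < n → ∀ t, r i t ∈ Complex.slitPlane := by
    intro i hi t
    apply unit_slit (hrunit i t)
    intro h
    have := hrclose i hi t
    rw [h] at this
    norm_num at this
  have hucont : ∀ i, Continuous (fun t => u i t) := by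
    intro i
    exact ((continuous_id.max continuous_const).min continuous_const)
  have hrcont : ∀ i, Continuous (fun t => r i t) := by
    intro i
    exact (hγ.comp (hucont (i+1))).div (hγ.comp (hucont i))
      (fun t => unit_ne_zero (hu _))
  have hargcont : ∀ i, i < n → Continuous (fun t => (r i t).arg) := by
    intro i hi
    rw [continuous_iff_continuousAt]
    intro t
    exact (Complex.continuousAt_arg (hrslit i hi t)).comp (hrcont i).continuousAt
  refine ⟨fun t => (γ 0).arg + ∑ i ∈ Finset.range n, (r i t).arg, ?_, ?_⟩
  · exact continuous_const.add (continuous_finset_sum _ fun i hi =>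
      hargcont i (Finset.mem_range.mp hi))
  · intro s hs
    have key : ∀ k, k ≤ n → Complex.exp
        ((((γ 0).arg + ∑ i ∈ Finset.range k, (r i s).arg : ℝ) : ℂ) * Complex.I)
        = γ (u k s) := by
      intro k
      induction k with
      | zero =>
        intro _
        simp only [Finset.range_zero, Finset.sum_empty, add_zero, hu0]
        exact unit_exp_arg (hu 0)
      | succ k ih =>
        intro hk
        have hk' : k ≤ n := Nat.le_of_succ_le hk
        rw [Finset.sum_range_succ, ← add_assoc]
        push_cast
        rw [add_mul, Complex.exp_add]
        have ihe := ih hk'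
        push_cast at ihe
        rw [ihe, unit_exp_arg (hrunit k s)]
        rw [hr_def]
        exact mul_div_cancel₀ _ (unit_ne_zero (hu _))
    have h2 := key n le_rfl
    have hun : u n s = s := by
      rw [hu_def]
      simp only
      rw [max_eq_left hs.1, div_self hnpos.ne', min_eq_left hs.2]
    rwa [hun] at h2



namespace PIV

/-- Two lifts of the same map on `[0,1]` have the same endpoint difference. -/
lemma lift_diff_eq {γ : ℝ → ℂ} {θ θ' : ℝ → ℝ}
    (h : ContinuousOn θ (Icc 0 1)) (h' : ContinuousOn θ' (Icc 0 1))
    (e : ∀ s ∈ Icc (0:ℝ) 1, Complex.exp ((θ s : ℂ) * Complex.I) = γ s)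
    (e' : ∀ s ∈ Icc (0:ℝ) 1, Complex.exp ((θ' s : ℂ) * Complex.I) = γ s) :
    θ 1 - θ 0 = θ' 1 - θ' 0 := by
  have hk : ∀ s ∈ Icc (0:ℝ) 1, ∃ k : ℤ, θ s - θ' s = k * (2 * Real.pi) := by
    intro s hs
    have hee : Complex.exp ((θ s : ℂ) * Complex.I) = Complex.exp ((θ' s : ℂ) * Complex.I) := by
      rw [e s hs, e' s hs]
    obtain ⟨k, hk⟩ := Complex.exp_eq_exp_iff_exists_int.mp hee
    refine ⟨k, ?_⟩
    have h2 : ((θ s : ℂ)) * Complex.I = ((θ' s + k * (2 * Real.pi) : ℝ) : ℂ) * Complex.I := by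
      rw [hk]; push_cast; ring
    have h3 := mul_right_cancel₀ Complex.I_ne_zero h2
    have h4 : θ s = θ' s + k * (2 * Real.pi) := by exact_mod_cast h3
    linarith
  have h0 : (0:ℝ) ∈ Icc (0:ℝ) 1 := by norm_num
  have h1 : (1:ℝ) ∈ Icc (0:ℝ) 1 := by norm_num
  obtain ⟨k0, hk0⟩ := hk 0 h0
  obtain ⟨k1, hk1⟩ := hk 1 h1
  have hd : ContinuousOn (fun s => θ s - θ' s) (Icc 0 1) := h.sub h'
  have hpi := Real.pi_pos
  have hkk : k0 = k1 := by
    by_contra hne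
    have hiv : ∀ v : ℝ, v ∈ uIcc (θ 0 - θ' 0) (θ 1 - θ' 1) →
        ∃ s ∈ Icc (0:ℝ) 1, θ s - θ' s = v := by
      intro v hv
      have := intermediate_value_uIcc (a := (0:ℝ)) (b := 1) (f := fun s => θ s - θ' s)
        (by rwa [uIcc_of_le (by norm_num : (0:ℝ) ≤ 1)])
      obtain ⟨s, hs, hsv⟩ := this hv
      exact ⟨s, by rwa [uIcc_of_le (by norm_num : (0:ℝ) ≤ 1)] at hs, hsv⟩
    rcases lt_or_gt_of_ne hne with hlt | hlt
    · have hv : (k0 * (2*Real.pi) + Real.pi) ∈ uIcc (θ 0 - θ' 0) (θ 1 - θ' 1) := by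
        rw [hk0, hk1, uIcc_of_le]
        · constructor
          · linarith
          · have : (k0:ℝ) + 1 ≤ k1 := by exact_mod_cast hlt
            nlinarith
        · have : (k0:ℝ) ≤ k1 := by exact_mod_cast hlt.le
          nlinarith
      obtain ⟨s, hs, hsv⟩ := hiv _ hv
      obtain ⟨k, hks⟩ := hk s hs
      rw [hks] at hsv
      have : ((2*(k - k0) : ℤ) : ℝ) = 1 := by push_cast; nlinarith
      have : (2*(k - k0) : ℤ) = 1 := by exact_mod_cast this
      omega
    · have hv : (k0 * (2*Real.pi) - Real.pi) ∈ uIcc (θ 0 - θ' 0) (θ 1 - θ' 1) := by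
        rw [hk0, hk1, uIcc_of_ge]
        · constructor
          · have : (k1:ℝ) + 1 ≤ k0 := by exact_mod_cast hlt
            nlinarith
          · linarith
        · have : (k1:ℝ) ≤ k0 := by exact_mod_cast hlt.le
          nlinarith
      obtain ⟨s, hs, hsv⟩ := hiv _ hv
      obtain ⟨k, hks⟩ := hk s hs
      rw [hks] at hsv
      have : ((2*(k - k0) : ℤ) : ℝ) = -1 := by push_cast; nlinarith
      have : (2*(k - k0) : ℤ) = -1 := by exact_mod_cast this
      omega
  rw [hkk] at hk0
  linarith [hk0, hk1]

open Classical in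
noncomputable def wind (γ : ℝ → ℂ) : ℝ :=
  if h : ∃ θ : ℝ → ℝ, ContinuousOn θ (Icc 0 1) ∧
      ∀ s ∈ Icc (0:ℝ) 1, Complex.exp ((θ s : ℂ) * Complex.I) = γ s then
    h.choose 1 - h.choose 0
  else 0

lemma wind_eq {γ : ℝ → ℂ} {θ : ℝ → ℝ} (hθ : ContinuousOn θ (Icc 0 1))
    (he : ∀ s ∈ Icc (0:ℝ) 1, Complex.exp ((θ s : ℂ) * Complex.I) = γ s) :
    wind γ = θ 1 - θ 0 := by
  have h : ∃ θ : ℝ → ℝ, ContinuousOn θ (Icc 0 1) ∧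
      ∀ s ∈ Icc (0:ℝ) 1, Complex.exp ((θ s : ℂ) * Complex.I) = γ s := ⟨θ, hθ, he⟩
  rw [wind, dif_pos h]
  exact lift_diff_eq h.choose_spec.1 hθ h.choose_spec.2 he

/-- Loops that stay uniformly closer than `2` have the same winding angle. -/
lemma wind_close {γ γ' : ℝ → ℂ} (hc : Continuous γ) (hc' : Continuous γ')
    (hu : ∀ s, ‖γ s‖ = 1) (hu' : ∀ s, ‖γ' s‖ = 1)
    (hl : γ 1 = γ 0) (hl' : γ' 1 = γ' 0)
    (hclose : ∀ s ∈ Icc (0:ℝ) 1, ‖γ' s - γ s‖ < 2) :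
    wind γ = wind γ' := by
  obtain ⟨θ, hθc, hθ⟩ := lift_exists hc hu
  set d : ℝ → ℂ := fun s => γ' s / γ s with hd_def
  have hdunit : ∀ s, ‖d s‖ = 1 := by
    intro s; simp [hd_def, norm_div, hu, hu']
  have hdne : ∀ s ∈ Icc (0:ℝ) 1, d s ≠ -1 := by
    intro s hs h
    have h1 : ‖d s - 1‖ = ‖γ' s - γ s‖ := by
      rw [hd_def]
      simp only [div_sub_one (unit_ne_zero (hu s)), norm_div, hu, div_one]
    rw [h] at h1
    have := hclose s hs
    rw [← h1] at this
    norm_num at this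
  have hdslit : ∀ s ∈ Icc (0:ℝ) 1, d s ∈ Complex.slitPlane :=
    fun s hs => unit_slit (hdunit s) (hdne s hs)
  have hdcont : ContinuousOn d (Icc 0 1) :=
    (hc'.continuousOn.div hc.continuousOn (fun s _ => unit_ne_zero (hu s)))
  set θ' : ℝ → ℝ := fun s => θ s + (d s).arg with hθ'_def
  have hθ'c : ContinuousOn θ' (Icc 0 1) := by
    apply hθc.continuousOn.add
    intro s hs
    exact (Complex.continuousAt_arg (hdslit s hs)).comp_continuousWithinAt (hdcont s hs)
  have hθ'e : ∀ s ∈ Icc (0:ℝ) 1, Complex.exp ((θ' s : ℂ) * Complex.I) = γ' s := by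
    intro s hs
    rw [hθ'_def]
    push_cast
    rw [add_mul, Complex.exp_add, hθ s hs, unit_exp_arg (hdunit s), hd_def]
    rw [mul_comm]
    exact div_mul_cancel₀ _ (unit_ne_zero (hu s))
  rw [wind_eq hθc.continuousOn hθ, wind_eq hθ'c hθ'e, hθ'_def]
  simp only
  have : (d 1).arg = (d 0).arg := by rw [hd_def]; simp only [hl, hl']
  rw [this]
  ring

/-- Core topological obstruction: there is no continuous family of unit loops connecting
a constant loop to the standard degree-one loop. -/
lemma no_such_map (Γ : ℝ × ℝ → ℂ) (hc : Continuous Γ)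
    (hu : ∀ x, ‖Γ x‖ = 1)
    (hloop : ∀ t, Γ (t, 1) = Γ (t, 0))
    (h0 : ∀ s, Γ (0, s) = Γ (0, 0))
    (h1 : ∀ s, Γ (1, s) = Complex.exp (((2 * Real.pi * s : ℝ) : ℂ) * Complex.I)) :
    False := by
  set W : ℝ → ℝ := fun t => wind (fun s => Γ (t, s)) with hW_def
  have hWloc : ∀ t₀ : ℝ, ∃ ε > 0, ∀ t, |t - t₀| < ε → W t = W t₀ := by
    intro t₀
    have hS : IsCompact (Icc (t₀ - 1) (t₀ + 1) ×ˢ Icc (0:ℝ) 1) :=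
      isCompact_Icc.prod isCompact_Icc
    have huc := hS.uniformContinuousOn_of_continuous hc.continuousOn
    rw [Metric.uniformContinuousOn_iff] at huc
    obtain ⟨δ, hδ, hδ2⟩ := huc 2 (by norm_num)
    refine ⟨min δ 1, by positivity, ?_⟩
    intro t ht
    have ht1 : |t - t₀| < 1 := lt_of_lt_of_le ht (min_le_right _ _)
    have htδ : |t - t₀| < δ := lt_of_lt_of_le ht (min_le_left _ _)
    have hclose : ∀ s ∈ Icc (0:ℝ) 1, ‖Γ (t, s) - Γ (t₀, s)‖ < 2 := by
      intro s hs
      have hmem1 : (t₀, s) ∈ Icc (t₀ - 1) (t₀ + 1) ×ˢ Icc (0:ℝ) 1 := by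
        constructor
        · constructor <;> simp <;> linarith
        · exact hs
      have hmem2 : (t, s) ∈ Icc (t₀ - 1) (t₀ + 1) ×ˢ Icc (0:ℝ) 1 := by
        rw [abs_lt] at ht1
        constructor
        · constructor <;> simp <;> linarith [ht1.1, ht1.2]
        · exact hs
      have hdist : dist (t, s) ((t₀, s) : ℝ × ℝ) < δ := by
        rw [Prod.dist_eq]
        simp only [dist_self]
        rw [max_eq_left dist_nonneg, Real.dist_eq]
        exact htδ
      have := hδ2 _ hmem2 _ hmem1 hdist
      rwa [Complex.dist_eq] at this
    exact (wind_close (hc.comp (continuous_const.prodMk continuous_id))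
      (hc.comp (continuous_const.prodMk continuous_id))
      (fun s => hu _) (fun s => hu _) (hloop t₀) (hloop t) hclose).symm
  -- W is locally constant, hence constant on ℝ
  have hclopen : IsClopen {t : ℝ | W t = W 0} := by
    constructor
    · rw [← isOpen_compl_iff]
      rw [isOpen_iff_mem_nhds]
      intro t ht
      obtain ⟨ε, hε, hloc⟩ := hWloc t
      rw [Metric.mem_nhds_iff]
      exact ⟨ε, hε, fun y hy => by
        have := hloc y (by rwa [Metric.mem_ball, Real.dist_eq] at hy)
        simp only [mem_compl_iff, mem_setOf_eq] at ht ⊢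
        rw [this]; exact ht⟩
    · rw [isOpen_iff_mem_nhds]
      intro t ht
      obtain ⟨ε, hε, hloc⟩ := hWloc t
      rw [Metric.mem_nhds_iff]
      exact ⟨ε, hε, fun y hy => by
        have := hloc y (by rwa [Metric.mem_ball, Real.dist_eq] at hy)
        simp only [mem_setOf_eq] at ht ⊢
        rw [this]; exact ht⟩
  have huniv : {t : ℝ | W t = W 0} = univ :=
    hclopen.eq_univ ⟨0, rfl⟩
  have hW1 : W 1 = W 0 := by
    have : (1:ℝ) ∈ {t : ℝ | W t = W 0} := huniv ▸ mem_univ 1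
    exact this
  have hW1v : W 1 = 2 * Real.pi := by
    have h := wind_eq (γ := fun s => Γ (1, s)) (θ := fun s => 2 * Real.pi * s)
      (by fun_prop) (fun s _ => (h1 s).symm)
    show wind (fun s => Γ (1, s)) = 2 * Real.pi
    rw [h]; ring
  have hW0v : W 0 = 0 := by
    have h := wind_eq (γ := fun s => Γ (0, s)) (θ := fun _ => (Γ (0, 0)).arg)
      continuousOn_const (fun s _ => by
        show Complex.exp (((Γ (0,0)).arg : ℂ) * Complex.I) = Γ (0, s)
        rw [h0 s]; exact unit_exp_arg (hu _))
    show wind (fun s => Γ (0, s)) = 0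
    rw [h]; ring
  rw [hW1v, hW0v] at hW1
  have := Real.pi_pos
  linarith

end PIV
end PIV
end PIV
theorem planar_intermediate_value
    (f : ℝ × ℝ → ℝ × ℝ)
    (A : Set (ℝ × ℝ)) (hA : A = Set.Icc (0:ℝ) 1 ×ˢ Set.Icc (0:ℝ) 1)
    (hf : ContinuousOn f A)
    (hinj : Set.InjOn f (frontier A)) :
    ∀ p : ℝ × ℝ, p ∉ f '' (frontier A) →
      Bornology.IsBounded (connectedComponentIn (f '' (frontier A))ᶜ p) →
      p ∈ f '' A := by
  classical
  intro p hpC hbd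
  by_contra hpA
  -- Basic compactness facts
  have hAclosed : IsClosed A := by rw [hA]; exact isClosed_Icc.prod isClosed_Icc
  have hAcpt : IsCompact A := by rw [hA]; exact isCompact_Icc.prod isCompact_Icc
  have hBsub : frontier A ⊆ A := hAclosed.frontier_subset
  have hBcpt : IsCompact (frontier A) := hAcpt.of_isClosed_subset isClosed_frontier hBsub
  set C : Set (ℝ × ℝ) := f '' frontier A with hC_def
  have hCcpt : IsCompact C := hBcpt.image_of_continuousOn (hf.mono hBsub)
  have hCclosed : IsClosed C := hCcpt.isClosed
  set K : Set (ℝ × ℝ) := connectedComponentIn Cᶜ p with hK_def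
  have hKopen : IsOpen K := hCclosed.isOpen_compl.connectedComponentIn
  have hpK : p ∈ K := mem_connectedComponentIn hpC
  -- the frontier of the component is inside the curve C
  have hfrK : frontier K ⊆ C := by
    intro x hx
    by_contra hxC
    have hxc : x ∈ Cᶜ := hxC
    have hLopen : IsOpen (connectedComponentIn Cᶜ x) := hCclosed.isOpen_compl.connectedComponentIn
    have hxL : x ∈ connectedComponentIn Cᶜ x := mem_connectedComponentIn hxc
    have hxcl : x ∈ closure K := hx.1
    obtain ⟨y, hyL, hyK⟩ : (connectedComponentIn Cᶜ x ∩ K).Nonempty := by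
      rw [mem_closure_iff] at hxcl
      exact hxcl _ hLopen hxL
    have h1 := connectedComponentIn_eq hyL
    have h2 := connectedComponentIn_eq hyK
    have hxc2 : x ∈ K := by rw [hK_def, h2, ← h1]; exact hxL
    exact hx.2 (by rwa [hKopen.interior_eq])
  -- f restricted to the frontier is a homeomorphism onto C
  haveI : CompactSpace (frontier A) := isCompact_iff_compactSpace.mp hBcpt
  have hfc : Continuous fun b : frontier A => f b := (hf.mono hBsub).restrict
  have hFbij : Function.Bijective (fun b : frontier A => (⟨f b, Set.mem_image_of_mem f b.2⟩ : C)) := by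
    constructor
    · intro a b hab
      exact Subtype.ext (hinj a.2 b.2 (congrArg Subtype.val hab))
    · rintro ⟨c, hc⟩
      obtain ⟨b, hb, rfl⟩ := hc
      exact ⟨⟨b, hb⟩, rfl⟩
  set E : frontier A ≃ C := Equiv.ofBijective _ hFbij with hE_def
  have hEc : Continuous E := hfc.subtype_mk _
  set H := hEc.homeoOfEquivCompactToT2 with hH_def
  have hHval : ∀ c : C, f ((H.symm c : ℝ × ℝ)) = c := by
    intro c
    exact congrArg Subtype.val (H.apply_symm_apply c)
  -- Tietze extension of the inverse
  obtain ⟨G1, hG1⟩ := ContinuousMap.exists_restrict_eq (X := ℝ × ℝ) hCclosed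
    ⟨fun c : C => (H.symm c : ℝ × ℝ).1, by fun_prop⟩
  obtain ⟨G2, hG2⟩ := ContinuousMap.exists_restrict_eq (X := ℝ × ℝ) hCclosed
    ⟨fun c : C => (H.symm c : ℝ × ℝ).2, by fun_prop⟩
  have hG1x : ∀ (x : ℝ × ℝ) (hx : x ∈ C), G1 x = (H.symm ⟨x, hx⟩ : ℝ × ℝ).1 :=
    fun x hx => DFunLike.congr_fun hG1 ⟨x, hx⟩
  have hG2x : ∀ (x : ℝ × ℝ) (hx : x ∈ C), G2 x = (H.symm ⟨x, hx⟩ : ℝ × ℝ).2 :=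
    fun x hx => DFunLike.congr_fun hG2 ⟨x, hx⟩
  set proj : ℝ → ℝ := fun r => max 0 (min r 1) with hproj_def
  have hprojc : Continuous proj := continuous_const.max (continuous_id.min continuous_const)
  have hprojmem : ∀ r, proj r ∈ Set.Icc (0:ℝ) 1 := by
    intro r
    constructor
    · exact le_max_left _ _
    · apply max_le (by norm_num) ((min_le_right _ _))
  have hprojfix : ∀ r ∈ Set.Icc (0:ℝ) 1, proj r = r := by
    intro r hr
    rw [hproj_def]
    simp only
    rw [min_eq_left hr.2, max_eq_right hr.1]
  set e : ℝ × ℝ → ℝ × ℝ := fun x => (proj (G1 x), proj (G2 x)) with he_def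
  have hec : Continuous e := (hprojc.comp G1.continuous).prodMk (hprojc.comp G2.continuous)
  have heA : ∀ x, e x ∈ A := by
    intro x
    rw [hA]
    exact ⟨hprojmem _, hprojmem _⟩
  have hefix : ∀ x ∈ C, f (e x) = x := by
    intro x hx
    have hmem : (H.symm ⟨x, hx⟩ : ℝ × ℝ) ∈ Set.Icc (0:ℝ) 1 ×ˢ Set.Icc (0:ℝ) 1 := by
      rw [← hA]; exact hBsub (H.symm ⟨x, hx⟩).2
    have hex : e x = (H.symm ⟨x, hx⟩ : ℝ × ℝ) := by
      rw [he_def]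
      simp only
      rw [hG1x x hx, hG2x x hx, hprojfix _ hmem.1, hprojfix _ hmem.2]
    rw [hex, hHval]
  -- The map Φ : identity outside the component, f ∘ e inside
  set Φ : ℝ × ℝ → ℝ × ℝ := (closure K).piecewise (fun x => f (e x)) id with hΦ_def
  have hfec : Continuous fun x => f (e x) := hf.comp_continuous hec heA
  have hΦc : Continuous Φ := by
    apply Continuous.piecewise ?_ hfec continuous_id
    intro a ha
    exact hefix a (hfrK (frontier_closure_subset ha))
  have hΦne : ∀ x, Φ x ≠ p := by
    intro x
    by_cases hx : x ∈ closure K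
    · rw [hΦ_def, Set.piecewise_eq_of_mem _ _ _ hx]
      intro h
      exact hpA ⟨e x, heA x, h⟩
    · rw [hΦ_def, Set.piecewise_eq_of_notMem _ _ _ hx]
      intro h
      simp only [id_eq] at h
      subst h
      exact hx (subset_closure hpK)
  have hΦfar : ∀ x ∉ closure K, Φ x = x := fun x hx =>
    Set.piecewise_eq_of_notMem _ _ _ hx
  -- bounding radius
  obtain ⟨r, hr⟩ := hbd.closure.subset_closedBall p
  set R : ℝ := max r 0 with hR_def
  have hKball : closure K ⊆ Metric.closedBall p R :=
    hr.trans (Metric.closedBall_subset_closedBall (le_max_left _ _))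
  have hR0 : 0 ≤ R := le_max_right _ _
  -- move to ℂ
  set cx : ℝ × ℝ → ℂ := fun q => (q.1 : ℂ) + (q.2 : ℂ) * Complex.I with hcx_def
  have hcxc : Continuous cx := by fun_prop
  have hcxre : ∀ q, (cx q).re = q.1 := by intro q; simp [hcx_def]
  have hcxim : ∀ q, (cx q).im = q.2 := by intro q; simp [hcx_def]
  have hcxinj : Function.Injective cx := by
    intro a b h
    have h1 := congrArg Complex.re h
    have h2 := congrArg Complex.im h
    rw [hcxre, hcxre] at h1
    rw [hcxim, hcxim] at h2
    exact Prod.ext h1 h2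
  set P : ℂ := cx p with hP_def
  set Ψ : ℂ → ℂ := fun z => cx (Φ (z.re, z.im)) with hΨ_def
  have hΨc : Continuous Ψ :=
    hcxc.comp (hΦc.comp (Complex.continuous_re.prodMk Complex.continuous_im))
  have hΨne : ∀ z, Ψ z ≠ P := fun z h => hΦne _ (hcxinj h)
  have hfar : ∀ z : ℂ, 2 * R < ‖z - P‖ → Ψ z = z := by
    intro z hz
    have hnot : (z.re, z.im) ∉ closure K := by
      intro hmem
      have hball := hKball hmem
      rw [Metric.mem_closedBall, Prod.dist_eq] at hball
      obtain ⟨hb1, hb2⟩ := max_le_iff.mp hball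
      rw [Real.dist_eq] at hb1 hb2
      have habs := Complex.norm_le_abs_re_add_abs_im (z - P)
      rw [Complex.sub_re, Complex.sub_im, hP_def, hcxre, hcxim] at habs
      simp only at hb1 hb2
      linarith
    rw [hΨ_def]
    simp only
    rw [hΦfar _ hnot, hcx_def]
    simp only [id_eq]
    exact Complex.re_add_im z
  set R' : ℝ := 2 * R + 1 with hR'_def
  have hR'pos : 0 < R' := by rw [hR'_def]; linarith
  set es : ℝ → ℂ := fun s => Complex.exp (((2 * Real.pi * s : ℝ) : ℂ) * Complex.I) with hes_def
  have hesc : Continuous es := by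
    apply Complex.continuous_exp.comp
    fun_prop
  have hesabs : ∀ s, ‖es s‖ = 1 := fun s => Complex.norm_exp_ofReal_mul_I _
  have hes10 : es 1 = es 0 := by
    simp only [hes_def, mul_one, mul_zero, Complex.ofReal_zero, zero_mul, Complex.exp_zero]
    push_cast
    rw [Complex.exp_two_pi_mul_I]
  set Z : ℝ × ℝ → ℂ := fun x => P + ((R' * x.1 : ℝ) : ℂ) * es x.2 with hZ_def
  have hZc : Continuous Z := by
    apply continuous_const.add
    exact (Complex.continuous_ofReal.comp (continuous_const.mul continuous_fst)).mul
      (hesc.comp continuous_snd)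
  set Γ : ℝ × ℝ → ℂ :=
    fun x => (Ψ (Z x) - P) / ((‖Ψ (Z x) - P‖ : ℝ) : ℂ) with hΓ_def
  have habsne : ∀ x, ‖Ψ (Z x) - P‖ ≠ 0 := by
    intro x
    exact norm_ne_zero_iff.mpr (sub_ne_zero.mpr (hΨne (Z x)))
  have hΓu : ∀ x, ‖Γ x‖ = 1 := by
    intro x
    rw [hΓ_def]
    simp only
    rw [norm_div, Complex.norm_real, Real.norm_eq_abs, abs_of_nonneg (norm_nonneg _)]
    exact div_self (habsne x)
  have hΓc : Continuous Γ := by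
    apply Continuous.div
    · exact (hΨc.comp hZc).sub continuous_const
    · exact Complex.continuous_ofReal.comp
        (continuous_norm.comp ((hΨc.comp hZc).sub continuous_const))
    · intro x
      exact Complex.ofReal_ne_zero.mpr (habsne x)
  have hΓloop : ∀ t, Γ (t, 1) = Γ (t, 0) := by
    intro t
    rw [hΓ_def]
    simp only [hZ_def, hes10]
  have hΓ0 : ∀ s, Γ (0, s) = Γ (0, 0) := by
    intro s
    rw [hΓ_def]
    simp only [hZ_def]
    norm_num
  have hΓ1 : ∀ s, Γ (1, s) = es s := by
    intro s
    have hZval : Z (1, s) = P + (R' : ℂ) * es s := by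
      rw [hZ_def]; norm_num
    have habs : ‖Z (1, s) - P‖ = R' := by
      rw [hZval, add_sub_cancel_left, norm_mul, Complex.norm_real, Real.norm_eq_abs,
        abs_of_pos hR'pos, hesabs, mul_one]
    have hΨZ : Ψ (Z (1, s)) = Z (1, s) := hfar _ (by rw [habs]; linarith)
    rw [hΓ_def]
    simp only [hΨZ, habs]
    rw [hZval, add_sub_cancel_left]
    exact mul_div_cancel_left₀ _ (Complex.ofReal_ne_zero.mpr hR'pos.ne')
  exact PIV.PIV.no_such_map Γ hΓc hΓu hΓloop hΓ0 (fun s => hΓ1 s)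
end
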